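/- For a maximal totally isotropic flag setup in O(p,∞): if h is a bounded operator with h*Φh = Φ written in block form with respect to a Witt basis (in which Φ has block form [[0, I_p, 0],[I_p, 0, 0],[0,0,−I]]) and g_t = diag(e^{tλ}, e^{−tλ}, I) with λ_1 ≥ … ≥ λ_p ≥ 0, then {‖g_t^{-1} h g_t‖ : t ≥ 0} is bounded if and only if: h_1 is block upper-triangular with respect to the level sets of λ, h_4 vanishes except on entries (i,j) with λ_i = λ_j = 0, and h_7 vanishes on columns j with λ_j > 0 (and the analogous conditions obtained from h^{-1}). -/

import Mathlib

open scoped RealInnerProductSpace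

section Stmt16Aux

variable {H : Type*} [NormedAddCommGroup H] [InnerProductSpace ℝ H] [CompleteSpace H]

/-- closed span of the basis vectors with weight `v`. -/
noncomputable def stmt16K (e' : ℕ → H) (Λ : ℕ → ℝ) (v : ℝ) : Submodule ℝ H :=
  (Submodule.span ℝ (e' '' {i | Λ i = v})).topologicalClosure

instance stmt16K_complete (e' : ℕ → H) (Λ : ℕ → ℝ) (v : ℝ) :
    CompleteSpace (stmt16K e' Λ v) :=
  (Submodule.isClosed_topologicalClosure _).completeSpace_coe

/-- orthogonal projection onto `stmt16K` as an endomorphism. -/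
noncomputable def stmt16P (e' : ℕ → H) (Λ : ℕ → ℝ) (v : ℝ) : H →L[ℝ] H :=
  (stmt16K e' Λ v).subtypeL.comp (Submodule.orthogonalProjectionOnto (stmt16K e' Λ v))

theorem stmt16P_mem {e' : ℕ → H} {Λ : ℕ → ℝ} {v : ℝ} {j : ℕ} (hj : Λ j = v) :
    e' j ∈ stmt16K e' Λ v :=
  (Submodule.span ℝ _).le_topologicalClosure (Submodule.subset_span ⟨j, hj, rfl⟩)

theorem stmt16P_eq {e' : ℕ → H} {Λ : ℕ → ℝ} {v : ℝ} {j : ℕ} (hj : Λ j = v) :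
    stmt16P e' Λ v (e' j) = e' j := by
  have := Submodule.orthogonalProjectionOnto_mem_subspace_eq_self (K := stmt16K e' Λ v) ⟨e' j, stmt16P_mem hj⟩
  simpa [stmt16P] using congrArg (Subtype.val) this

theorem stmt16P_ne {e' : ℕ → H} (he : Orthonormal ℝ e') {Λ : ℕ → ℝ} {v : ℝ} {j : ℕ}
    (hj : Λ j ≠ v) : stmt16P e' Λ v (e' j) = 0 := by
  have hmem : e' j ∈ (stmt16K e' Λ v)ᗮ := by
    rw [Submodule.mem_orthogonal]
    intro u hu
    have hle : stmt16K e' Λ v ≤ (innerSL ℝ (e' j)).ker := by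
      refine Submodule.topologicalClosure_minimal _ ?_ (by exact ContinuousLinearMap.isClosed_ker _)
      rw [Submodule.span_le]
      rintro x ⟨i, hi, rfl⟩
      have hij : j ≠ i := fun hctr => hj (hctr ▸ hi)
      simp [LinearMap.mem_ker, orthonormal_iff_ite.mp he j i, hij]
    have : ⟪e' j, u⟫ = 0 := hle hu
    rwa [real_inner_comm] at this
  have := Submodule.orthogonalProjectionOnto_apply_of_mem_orthogonal hmem
  simp [stmt16P, this]

theorem stmt16P_inner {e' : ℕ → H} {Λ : ℕ → ℝ} {v : ℝ} {i : ℕ} (hi : Λ i = v) (y : H) :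
    ⟪e' i, stmt16P e' Λ v y⟫ = ⟪e' i, y⟫ := by
  have h1 : ⟪(Submodule.orthogonalProjectionOnto (stmt16K e' Λ v) (e' i) : H), y⟫
      = ⟪e' i, (Submodule.orthogonalProjectionOnto (stmt16K e' Λ v) y : H)⟫ :=
    Submodule.inner_starProjection_left_eq_right _ (e' i) y
  have h2 : ((Submodule.orthogonalProjectionOnto (stmt16K e' Λ v) (e' i)) : H) = e' i := by
    simpa using congrArg Subtype.val
      (Submodule.orthogonalProjectionOnto_mem_subspace_eq_self (K := stmt16K e' Λ v) ⟨e' i, stmt16P_mem hi⟩)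
  rw [stmt16P]
  simp only [ContinuousLinearMap.coe_comp', Function.comp_apply, Submodule.subtypeL_apply]
  rw [← h1, h2]

theorem stmt16P_zero {e' : ℕ → H} {Λ : ℕ → ℝ} {v : ℝ} {y : H}
    (hy : ∀ i, Λ i = v → ⟪e' i, y⟫ = 0) : stmt16P e' Λ v y = 0 := by
  set z := stmt16P e' Λ v y with hz
  have hzK : z ∈ stmt16K e' Λ v := by
    simp only [hz, stmt16P, ContinuousLinearMap.coe_comp', Function.comp_apply,
      Submodule.subtypeL_apply]
    exact (Submodule.orthogonalProjectionOnto (stmt16K e' Λ v) y).2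
  have hzorth : z ∈ (Submodule.span ℝ (e' '' {i | Λ i = v}))ᗮ := by
    rw [Submodule.mem_orthogonal]
    intro u hu
    have hle : Submodule.span ℝ (e' '' {i | Λ i = v}) ≤ (innerSL ℝ z).ker := by
      rw [Submodule.span_le]
      rintro x ⟨i, hi, rfl⟩
      have : ⟪e' i, z⟫ = 0 := by rw [hz, stmt16P_inner hi]; exact hy i hi
      simpa [real_inner_comm] using this
    have : ⟪z, u⟫ = 0 := hle hu
    rwa [real_inner_comm] at this
  have hzK' : z ∈ ((Submodule.span ℝ (e' '' {i | Λ i = v}))ᗮ)ᗮ := by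
    refine Submodule.topologicalClosure_minimal _ (Submodule.le_orthogonal_orthogonal _)
      (Submodule.isClosed_orthogonal _) hzK
  exact Submodule.disjoint_def.mp
    (Submodule.orthogonal_disjoint ((Submodule.span ℝ (e' '' {i | Λ i = v}))ᗮ)) z hzorth hzK'

end Stmt16Aux

/-- Boundedness of conjugates by the transvection semigroup characterizes block
triangularity: for `h ∈ O(p,∞)` written in a Witt (hyperbolic) Hilbert basis
`e'` in which `Φ` has block form `[[0, Iₚ, 0], [Iₚ, 0, 0], [0, 0, -I]]`, and
`g t = diag (e^{tλ}, e^{-tλ}, I)` (with weights `Λ i = λ i`, `Λ (p+i) = -λ i`,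
`Λ i = 0` for `i ≥ 2p`, where `λ₁ ≥ … ≥ λₚ ≥ 0`), the family
`{‖(g t)⁻¹ h (g t)‖ : t ≥ 0}` is bounded if and only if all matrix entries
`⟪e' i, h (e' j)⟫` with `Λ i < Λ j` vanish (block upper-triangularity of `h₁`
along the level sets of `λ`, vanishing of `h₄` off entries with
`λ i = λ j = 0`, vanishing of the columns of `h₇` with `λ j > 0`), together
with the analogous conditions for `h⁻¹`. -/
theorem stmt16 {H : Type*} [NormedAddCommGroup H] [InnerProductSpace ℝ H]
    [CompleteSpace H] [TopologicalSpace.SeparableSpace H]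
    (p : ℕ) (e' : ℕ → H) (he : Orthonormal ℝ e')
    (hdense : (Submodule.span ℝ (Set.range e')).topologicalClosure = ⊤)
    (lam : Fin p → ℝ) (hmono : Antitone lam) (hnn : ∀ i, 0 ≤ lam i)
    (Λ : ℕ → ℝ)
    (hΛ₁ : ∀ i : Fin p, Λ (i : ℕ) = lam i)
    (hΛ₂ : ∀ i : Fin p, Λ (p + (i : ℕ)) = - lam i)
    (hΛ₃ : ∀ i : ℕ, 2 * p ≤ i → Λ i = 0)
    (Φ : H →L[ℝ] H)
    (hΦ₁ : ∀ i : Fin p, Φ (e' (i : ℕ)) = e' (p + (i : ℕ)))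
    (hΦ₂ : ∀ i : Fin p, Φ (e' (p + (i : ℕ))) = e' (i : ℕ))
    (hΦ₃ : ∀ i : ℕ, 2 * p ≤ i → Φ (e' i) = - e' i)
    (g : ℝ → (H ≃L[ℝ] H))
    (hg : ∀ t : ℝ, ∀ i : ℕ, g t (e' i) = Real.exp (t * Λ i) • e' i)
    (h : H ≃L[ℝ] H)
    (hO : ∀ u v : H, ⟪h u, Φ (h v)⟫ = ⟪u, Φ v⟫) :
    (∃ C : ℝ, ∀ t : ℝ, 0 ≤ t →
        ‖(((g t).symm : H →L[ℝ] H).comp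
          ((h : H →L[ℝ] H).comp ((g t : H ≃L[ℝ] H) : H →L[ℝ] H)))‖ ≤ C) ↔
    ((∀ i j : ℕ, Λ i < Λ j → ⟪e' i, h (e' j)⟫ = 0) ∧
     (∀ i j : ℕ, Λ i < Λ j → ⟪e' i, h.symm (e' j)⟫ = 0)) := by
  classical
  have hDense : Dense ((Submodule.span ℝ (Set.range e') : Submodule ℝ H) : Set H) :=
    Submodule.dense_iff_topologicalClosure_eq_top.mpr hdense
  have o := orthonormal_iff_ite.mp he
  -- inverse of g on basis vectors
  have hgsymm : ∀ t j, (g t).symm (e' j) = Real.exp (-(t * Λ j)) • e' j := by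
    intro t j
    have h1 := congrArg (g t).symm (hg t j)
    rw [ContinuousLinearEquiv.symm_apply_apply, map_smul] at h1
    have h2 : (Real.exp (t * Λ j))⁻¹ • e' j = (g t).symm (e' j) := by
      conv_lhs => rw [h1]
      rw [smul_smul, inv_mul_cancel₀ (Real.exp_ne_zero _), one_smul]
    rw [Real.exp_neg]
    exact h2.symm
  -- structure of Φ on the basis
  have keyΦ : ∀ i : ℕ, ∃ k : ℕ, ∃ ε : ℝ, ε * ε = 1 ∧ Φ (e' i) = ε • e' k ∧ Λ k = -Λ i ∧
      Φ (e' k) = ε • e' i := by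
    intro i
    rcases lt_or_ge i p with hip | hip
    · refine ⟨p + i, 1, by norm_num, ?_, ?_, ?_⟩
      · rw [one_smul]; exact hΦ₁ ⟨i, hip⟩
      · have h1 : Λ (p + i) = - lam ⟨i, hip⟩ := hΛ₂ ⟨i, hip⟩
        have h2 : Λ i = lam ⟨i, hip⟩ := hΛ₁ ⟨i, hip⟩
        rw [h1, h2]
      · rw [one_smul]; exact hΦ₂ ⟨i, hip⟩
    · rcases lt_or_ge i (2 * p) with hip2 | hip2
      · have hlt : i - p < p := by omega
        have hieq : p + (i - p) = i := by omega
        refine ⟨i - p, 1, by norm_num, ?_, ?_, ?_⟩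
        · have h1 : Φ (e' (p + (i - p))) = e' (i - p) := hΦ₂ ⟨i - p, hlt⟩
          rw [hieq] at h1
          rw [one_smul]; exact h1
        · have h1 : Λ (i - p) = lam ⟨i - p, hlt⟩ := hΛ₁ ⟨i - p, hlt⟩
          have h2 : Λ (p + (i - p)) = - lam ⟨i - p, hlt⟩ := hΛ₂ ⟨i - p, hlt⟩
          rw [hieq] at h2
          rw [h1, h2, neg_neg]
        · have h1 : Φ (e' (i - p)) = e' (p + (i - p)) := hΦ₁ ⟨i - p, hlt⟩
          rw [hieq] at h1
          rw [one_smul]; exact h1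
      · refine ⟨i, -1, by norm_num, ?_, ?_, ?_⟩
        · rw [hΦ₃ i hip2, neg_one_smul]
        · rw [hΛ₃ i hip2, neg_zero]
        · rw [hΦ₃ i hip2, neg_one_smul]
  -- Φ is symmetric on basis vectors
  have Φsym0 : ∀ i j : ℕ, ⟪Φ (e' i), e' j⟫ = ⟪e' i, Φ (e' j)⟫ := by
    intro i j
    obtain ⟨ki, εi, hεi, hi1, -, hi2⟩ := keyΦ i
    obtain ⟨kj, εj, hεj, hj1, -, hj2⟩ := keyΦ j
    rw [hi1, hj1, real_inner_smul_left, real_inner_smul_right, o ki j, o i kj]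
    by_cases hk1 : ki = j <;> by_cases hk2 : i = kj
    · -- both entries are nonzero; show εi = εj
      have heq : εi • e' j = εj • e' j := by
        rw [← hk1, ← hi1, hk2, hj2, hk1]
      have h3 := congrArg (fun z => ⟪e' j, z⟫) heq
      simp only [real_inner_smul_right, o] at h3
      simp [real_inner_smul_right, o] at h3
      simp [hk1, hk2, h3]
    · -- ki = j but i ≠ kj : impossible unless εi = 0
      exfalso
      have heq : εi • e' i = εj • e' kj := by
        rw [← hi2, hk1, hj1]
      have h3 := congrArg (fun z => ⟪e' i, z⟫) heq
      simp only [real_inner_smul_right, o] at h3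
      simp [real_inner_smul_right, o, hk2] at h3
      rw [h3] at hεi; norm_num at hεi
    · -- i = kj but ki ≠ j : impossible
      exfalso
      have heq : εj • e' j = εi • e' ki := by
        rw [← hj2, ← hk2, hi1]
      have h3 := congrArg (fun z => ⟪e' j, z⟫) heq
      have hk1' : j ≠ ki := fun hctr => hk1 hctr.symm
      simp only [real_inner_smul_right, o] at h3
      simp [real_inner_smul_right, o, hk1'] at h3
      rw [h3] at hεj; norm_num at hεj
    · simp [hk1, hk2]
  -- Φ is symmetric against arbitrary vectors
  have Φsym : ∀ (j : ℕ) (y : H), ⟪Φ (e' j), y⟫ = ⟪e' j, Φ y⟫ := by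
    intro j y
    have hfun : (innerSL ℝ (Φ (e' j)) : H →L[ℝ] ℝ) = (innerSL ℝ (e' j)).comp Φ := by
      refine ContinuousLinearMap.ext_on hDense ?_
      rintro _ ⟨k, rfl⟩
      simpa using Φsym0 j k
    simpa using DFunLike.congr_fun hfun y
  -- entries of h.symm from entries of h
  have hsymmcond : (∀ i j : ℕ, Λ i < Λ j → ⟪e' i, h (e' j)⟫ = 0) →
      ∀ i j : ℕ, Λ i < Λ j → ⟪e' i, h.symm (e' j)⟫ = 0 := by
    intro hup i j hij
    obtain ⟨ki, εi, hεi, hi1, hiΛ, hi2⟩ := keyΦ i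
    obtain ⟨kj, εj, hεj, hj1, hjΛ, hj2⟩ := keyΦ j
    have he'i : Φ (εi • e' ki) = e' i := by
      rw [map_smul, hi2, smul_smul, hεi, one_smul]
    have h1 : ⟪e' i, h.symm (e' j)⟫ = ⟪h.symm (e' j), Φ (εi • e' ki)⟫ := by
      rw [he'i, real_inner_comm]
    have h2 := hO (h.symm (e' j)) (εi • e' ki)
    rw [ContinuousLinearEquiv.apply_symm_apply] at h2
    rw [h1, ← h2, map_smul, map_smul, real_inner_smul_right]
    rw [← Φsym j (h (e' ki)), hj1, real_inner_smul_left]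
    rw [hup kj ki (by rw [hiΛ, hjΛ]; exact neg_lt_neg hij), mul_zero, mul_zero]
  -- inner products against (g t).symm applied to arbitrary vectors
  have hinner_gsymm : ∀ (t : ℝ) (i : ℕ) (y : H),
      ⟪e' i, (g t).symm y⟫ = Real.exp (-(t * Λ i)) * ⟪e' i, y⟫ := by
    intro t i y
    have hfun : (innerSL ℝ (e' i)).comp ((g t).symm : H →L[ℝ] H)
        = Real.exp (-(t * Λ i)) • innerSL ℝ (e' i) := by
      refine ContinuousLinearMap.ext_on hDense ?_
      rintro _ ⟨k, rfl⟩
      simp only [ContinuousLinearMap.coe_comp', Function.comp_apply,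
        ContinuousLinearEquiv.coe_coe, ContinuousLinearMap.coe_smul', Pi.smul_apply,
        innerSL_apply_apply, smul_eq_mul]
      rw [hgsymm, real_inner_smul_right, o i k]
      by_cases hik : i = k
      · subst hik; simp
      · simp [hik]
    simpa using DFunLike.congr_fun hfun y
  constructor
  · -- boundedness implies vanishing of entries
    rintro ⟨C, hCb⟩
    have hup : ∀ i j : ℕ, Λ i < Λ j → ⟪e' i, h (e' j)⟫ = 0 := by
      intro i j hij
      by_contra hc
      set c := ⟪e' i, h (e' j)⟫ with hcdef
      have habs : ∀ t : ℝ, 0 ≤ t → Real.exp (t * (Λ j - Λ i)) * |c| ≤ C := by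
        intro t ht
        set At := (((g t).symm : H →L[ℝ] H).comp
          ((h : H →L[ℝ] H).comp ((g t : H ≃L[ℝ] H) : H →L[ℝ] H))) with hAt
        have hentry : ⟪e' i, At (e' j)⟫ = Real.exp (t * (Λ j - Λ i)) * c := by
          simp only [hAt, ContinuousLinearMap.coe_comp', Function.comp_apply,
            ContinuousLinearEquiv.coe_coe]
          rw [hg t j, map_smul, map_smul, real_inner_smul_right, hinner_gsymm]
          rw [← hcdef, ← mul_assoc, ← Real.exp_add]
          ring_nf
        have hb1 : |⟪e' i, At (e' j)⟫| ≤ ‖At‖ := by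
          calc |⟪e' i, At (e' j)⟫| ≤ ‖e' i‖ * ‖At (e' j)‖ := abs_real_inner_le_norm _ _
            _ = ‖At (e' j)‖ := by rw [he.1 i, one_mul]
            _ ≤ ‖At‖ * ‖e' j‖ := At.le_opNorm _
            _ = ‖At‖ := by rw [he.1 j, mul_one]
        have hb2 : |⟪e' i, At (e' j)⟫| ≤ C := hb1.trans (hCb t ht)
        rw [hentry, abs_mul, abs_of_pos (Real.exp_pos _)] at hb2
        exact hb2
      have hcpos : 0 < |c| := abs_pos.mpr hc
      have hC0 : 0 < C := lt_of_lt_of_le hcpos (by simpa using habs 0 le_rfl)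
      set δ := Λ j - Λ i with hδdef
      have hδ : 0 < δ := sub_pos.mpr hij
      set t := max 0 (Real.log ((C + 1) / |c|) / δ) with htdef
      have ht : 0 ≤ t := le_max_left _ _
      have h2 : Real.log ((C + 1) / |c|) ≤ t * δ := by
        have hle : Real.log ((C + 1) / |c|) / δ ≤ t := le_max_right _ _
        calc Real.log ((C + 1) / |c|) = Real.log ((C + 1) / |c|) / δ * δ := by
              field_simp
          _ ≤ t * δ := mul_le_mul_of_nonneg_right hle hδ.le
      have h3 : (C + 1) / |c| ≤ Real.exp (t * δ) := by
        rw [← Real.exp_log (show (0:ℝ) < (C + 1) / |c| by positivity)]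
        exact Real.exp_le_exp.mpr h2
      have h4 : C + 1 ≤ Real.exp (t * δ) * |c| := by
        rw [div_le_iff₀ hcpos] at h3
        linarith
      have h5 := habs t ht
      linarith
    exact ⟨hup, hsymmcond hup⟩
  · -- vanishing of entries implies boundedness
    rintro ⟨hup, -⟩
    set V : Finset ℝ := Finset.image Λ (Finset.range (2 * p + 1)) with hV
    have hVmem : ∀ j : ℕ, Λ j ∈ V := by
      intro j
      rcases lt_or_ge j (2 * p + 1) with hj | hj
      · exact Finset.mem_image_of_mem Λ (Finset.mem_range.mpr hj)
      · have hj0 : Λ j = Λ (2 * p) := by rw [hΛ₃ j (by omega), hΛ₃ (2 * p) le_rfl]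
        rw [hj0]
        exact Finset.mem_image_of_mem Λ (Finset.mem_range.mpr (by omega))
    have hgsum : ∀ (t : ℝ) (y : H),
        (g t).symm y = ∑ v ∈ V, Real.exp (-(t * v)) • stmt16P e' Λ v y := by
      intro t y
      have hfun : ((g t).symm : H →L[ℝ] H)
          = ∑ v ∈ V, Real.exp (-(t * v)) • stmt16P e' Λ v := by
        refine ContinuousLinearMap.ext_on hDense ?_
        rintro _ ⟨j, rfl⟩
        rw [ContinuousLinearMap.sum_apply]
        simp only [ContinuousLinearMap.smul_apply, ContinuousLinearEquiv.coe_coe]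
        rw [Finset.sum_eq_single (Λ j)]
        · rw [hgsymm, stmt16P_eq rfl]
        · intro v _ hne
          rw [stmt16P_ne he (fun hh => hne hh.symm), smul_zero]
        · exact fun habs => absurd (hVmem j) habs
      simpa using DFunLike.congr_fun hfun y
    have hblock : ∀ v w : ℝ, v < w →
        (stmt16P e' Λ v).comp ((h : H →L[ℝ] H).comp (stmt16P e' Λ w)) = 0 := by
      intro v w hvw
      refine ContinuousLinearMap.ext_on hDense ?_
      rintro _ ⟨j, rfl⟩
      simp only [ContinuousLinearMap.coe_comp', Function.comp_apply,
        ContinuousLinearMap.zero_apply]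
      by_cases hj : Λ j = w
      · rw [stmt16P_eq hj]
        exact stmt16P_zero (fun i hi => hup i j (by rw [hi, hj]; exact hvw))
      · rw [stmt16P_ne he hj, map_zero, map_zero]
    have hAdecomp : ∀ t : ℝ,
        (((g t).symm : H →L[ℝ] H).comp
          ((h : H →L[ℝ] H).comp ((g t : H ≃L[ℝ] H) : H →L[ℝ] H)))
        = ∑ v ∈ V, ∑ w ∈ V, (Real.exp (-(t * v)) * Real.exp (t * w)) •
            ((stmt16P e' Λ v).comp ((h : H →L[ℝ] H).comp (stmt16P e' Λ w))) := by
      intro t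
      refine ContinuousLinearMap.ext_on hDense ?_
      rintro _ ⟨j, rfl⟩
      simp only [ContinuousLinearMap.coe_comp', Function.comp_apply,
        ContinuousLinearEquiv.coe_coe, ContinuousLinearMap.sum_apply,
        ContinuousLinearMap.smul_apply]
      rw [hg t j, map_smul, map_smul, hgsum t]
      rw [Finset.smul_sum]
      refine Finset.sum_congr rfl (fun v _ => ?_)
      rw [Finset.sum_eq_single (Λ j)]
      · rw [stmt16P_eq rfl, smul_smul, mul_comm]
      · intro w _ hne
        rw [stmt16P_ne he (fun hh => hne hh.symm), map_zero, map_zero, smul_zero]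
      · exact fun habs => absurd (hVmem j) habs
    refine ⟨∑ v ∈ V, ∑ w ∈ V,
      ‖(stmt16P e' Λ v).comp ((h : H →L[ℝ] H).comp (stmt16P e' Λ w))‖, ?_⟩
    intro t ht
    rw [hAdecomp t]
    refine (norm_sum_le _ _).trans (Finset.sum_le_sum fun v _ => ?_)
    refine (norm_sum_le _ _).trans (Finset.sum_le_sum fun w _ => ?_)
    rcases le_or_gt w v with hwv | hvw
    · rw [norm_smul (Real.exp (-(t * v)) * Real.exp (t * w))
        ((stmt16P e' Λ v).comp ((h : H →L[ℝ] H).comp (stmt16P e' Λ w)))]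
      refine le_of_eq_of_le rfl ?_
      have h1 : ‖Real.exp (-(t * v)) * Real.exp (t * w)‖ ≤ 1 := by
        rw [← Real.exp_add, Real.norm_eq_abs, abs_of_pos (Real.exp_pos _)]
        apply Real.exp_le_one_iff.mpr
        nlinarith
      exact mul_le_of_le_one_left (norm_nonneg _) h1
    · rw [hblock v w hvw]
      simp
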